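/- Let E be a unital trace-preserving completely positive map (unital quantum channel) on the operators of a finite-dimensional Hilbert space, and let ρ = E(σ) for density operators ρ and σ. Then the spectrum of ρ (as a vector of eigenvalues) is majorised by the spectrum of σ. -/

import Mathlib

open Finset Matrix ComplexOrder

/-- `p` is majorised by `q`. -/
def Majorizes {n : ℕ} (p q : Fin n → ℝ) : Prop :=
  (∀ s : Finset (Fin n), ∃ t : Finset (Fin n), t.card = s.card ∧ ∑ i ∈ s, p i ≤ ∑ i ∈ t, q i)
  ∧ ∑ i, p i = ∑ i, q i

/-- Complete positivity via the existence of a Kraus representation. -/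
def IsCP {I J : Type*} [Fintype I] [Fintype J]
    (E : Matrix I I ℂ →ₗ[ℂ] Matrix J J ℂ) : Prop :=
  ∃ (r : ℕ) (K : Fin r → Matrix J I ℂ), ∀ X, E X = ∑ a, K a * X * (K a)ᴴ

/-- There is a set of `k` indices carrying the `k` largest values of `q`. -/
lemma exists_topk {n : ℕ} (q : Fin n → ℝ) :
    ∀ k : ℕ, k ≤ n → ∃ t : Finset (Fin n), t.card = k ∧ ∀ i ∈ t, ∀ j ∉ t, q j ≤ q i := by
  intro k
  induction k with
  | zero => exact fun _ => ⟨∅, by simp⟩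
  | succ k ih =>
    intro hk
    obtain ⟨t, htc, ht⟩ := ih (by omega)
    have hne : tᶜ.Nonempty := by
      rw [← Finset.card_pos, Finset.card_compl]
      simp only [Fintype.card_fin, htc]
      omega
    obtain ⟨j0, hj0, hmax⟩ := tᶜ.exists_max_image q hne
    have hj0t : j0 ∉ t := Finset.mem_compl.mp hj0
    refine ⟨insert j0 t, by rw [Finset.card_insert_of_notMem hj0t, htc], ?_⟩
    intro i hi j hj
    have hjt : j ∉ t := fun hjt => hj (Finset.mem_insert_of_mem hjt)
    have hjj0 : j ≠ j0 := fun hjj0 => hj (hjj0 ▸ Finset.mem_insert_self _ _)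
    rcases Finset.mem_insert.mp hi with rfl | hi
    · exact hmax j (Finset.mem_compl.mpr hjt)
    · exact ht i hi j hjt

/-- A subconvex combination with total weight `k` is at most the sum of the `k` largest values. -/
lemma weight_bound {n : ℕ} (q c : Fin n → ℝ) (hc0 : ∀ j, 0 ≤ c j) (hc1 : ∀ j, c j ≤ 1)
    (k : ℕ) (hk : k ≤ n) (hsum : ∑ j, c j = k) :
    ∃ t : Finset (Fin n), t.card = k ∧ ∑ j, c j * q j ≤ ∑ j ∈ t, q j := by
  obtain ⟨t, htc, ht⟩ := exists_topk q k hk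
  refine ⟨t, htc, ?_⟩
  rcases t.eq_empty_or_nonempty with rfl | hne
  · simp only [Finset.card_empty] at htc
    have hzero : ∑ j, c j = 0 := by rw [hsum, ← htc]; simp
    have hz := (Finset.sum_eq_zero_iff_of_nonneg (fun j _ => hc0 j)).mp hzero
    have hz2 : ∑ j, c j * q j = 0 :=
      Finset.sum_eq_zero fun j hj => by rw [hz j hj, zero_mul]
    simp [hz2]
  · obtain ⟨i0, hi0, hmin⟩ := t.exists_min_image q hne
    have hcompl : ∑ j ∈ tᶜ, c j = ∑ i ∈ t, (1 - c i) := by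
      have h1 := Finset.sum_add_sum_compl t c
      have h2 : ∑ i ∈ t, (1 - c i) = t.card - ∑ i ∈ t, c i := by
        rw [Finset.sum_sub_distrib, Finset.sum_const, nsmul_eq_mul, mul_one]
      rw [h2, htc, ← hsum]
      linarith
    calc ∑ j, c j * q j
        = ∑ j ∈ t, c j * q j + ∑ j ∈ tᶜ, c j * q j := (Finset.sum_add_sum_compl t _).symm
      _ ≤ ∑ j ∈ t, c j * q j + ∑ j ∈ tᶜ, c j * q i0 := by
          refine add_le_add_right (Finset.sum_le_sum fun j hj => ?_) _
          exact mul_le_mul_of_nonneg_left (ht i0 hi0 j (Finset.mem_compl.mp hj)) (hc0 j)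
      _ = ∑ j ∈ t, c j * q j + (∑ j ∈ tᶜ, c j) * q i0 := by rw [Finset.sum_mul]
      _ = ∑ j ∈ t, c j * q j + ∑ i ∈ t, (1 - c i) * q i0 := by rw [hcompl, Finset.sum_mul]
      _ ≤ ∑ j ∈ t, c j * q j + ∑ i ∈ t, (1 - c i) * q i := by
          refine add_le_add_right (Finset.sum_le_sum fun i hi => ?_) _
          exact mul_le_mul_of_nonneg_left (hmin i hi) (by linarith [hc1 i])
      _ = ∑ i ∈ t, q i := by
          rw [← Finset.sum_add_distrib]
          exact Finset.sum_congr rfl fun i _ => by ring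

lemma trace_mul_std {n : ℕ} (M : Matrix (Fin n) (Fin n) ℂ) (i j : Fin n) :
    (M * single j i 1).trace = M i j := by
  simp [Matrix.trace, Matrix.diag, Matrix.mul_apply, Matrix.single, ite_and,
    Finset.sum_ite_eq, Finset.sum_ite_eq', eq_comm]

theorem unital_channel_spectrum_majorised {n : ℕ}
    (E : Matrix (Fin n) (Fin n) ℂ →ₗ[ℂ] Matrix (Fin n) (Fin n) ℂ)
    (hCP : IsCP E)
    (hTP : ∀ X, (E X).trace = X.trace)
    (hU : E 1 = 1)
    (ρ σ : Matrix (Fin n) (Fin n) ℂ)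
    (hρ : ρ.PosSemidef) (hρtr : ρ.trace = 1)
    (hσ : σ.PosSemidef) (hσtr : σ.trace = 1)
    (h : ρ = E σ) :
    Majorizes hρ.1.eigenvalues hσ.1.eigenvalues := by
  classical
  obtain ⟨r, K, hK⟩ := hCP
  set p : Fin n → ℝ := hρ.1.eigenvalues with hp_def
  set q : Fin n → ℝ := hσ.1.eigenvalues with hq_def
  set U : Matrix (Fin n) (Fin n) ℂ := ↑(hρ.1.eigenvectorUnitary) with hU_def
  set V : Matrix (Fin n) (Fin n) ℂ := ↑(hσ.1.eigenvectorUnitary) with hV_def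
  have hUU : U * star U = 1 := Matrix.mem_unitaryGroup_iff.mp hρ.1.eigenvectorUnitary.2
  have hUU' : star U * U = 1 := Matrix.mem_unitaryGroup_iff'.mp hρ.1.eigenvectorUnitary.2
  have hVV : V * star V = 1 := Matrix.mem_unitaryGroup_iff.mp hσ.1.eigenvectorUnitary.2
  have hVV' : star V * V = 1 := Matrix.mem_unitaryGroup_iff'.mp hσ.1.eigenvectorUnitary.2
  set M : Fin r → Matrix (Fin n) (Fin n) ℂ := fun a => star U * K a * V with hM_def
  have hMstar : ∀ a, star (M a) = star V * (K a)ᴴ * U := by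
    intro a
    show star (star U * K a * V) = _
    rw [StarMul.star_mul, StarMul.star_mul, star_star, ← Matrix.star_eq_conjTranspose,
      Matrix.mul_assoc]
  -- Kraus sum identity from trace preservation
  have hS : ∑ a, (K a)ᴴ * K a = 1 := by
    have h1 : ∀ X : Matrix (Fin n) (Fin n) ℂ,
        ((∑ a, (K a)ᴴ * K a) * X).trace = ((1 : Matrix (Fin n) (Fin n) ℂ) * X).trace := by
      intro X
      rw [one_mul, ← hTP X, hK X, Matrix.trace_sum, Finset.sum_mul, Matrix.trace_sum]
      refine Finset.sum_congr rfl fun a _ => ?_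
      rw [Matrix.mul_assoc, Matrix.trace_mul_comm, Matrix.mul_assoc]
    ext i j
    have := h1 (single j i 1)
    rwa [trace_mul_std, trace_mul_std] at this
  -- E 1 identity
  have hK1 : ∑ a, K a * (K a)ᴴ = 1 := by
    have := hK 1
    rw [hU] at this
    simpa [mul_one] using this.symm
  -- diagonalization of the key relation
  have hDρ : star U * ρ * U = diagonal (RCLike.ofReal ∘ p) := by
    have hs : ρ = U * diagonal (RCLike.ofReal ∘ p) * star U := hρ.1.spectral_theorem
    rw [hs, show star U * (U * diagonal (RCLike.ofReal ∘ p) * star U) * U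
      = (star U * U) * diagonal (RCLike.ofReal ∘ p) * (star U * U) by simp only [Matrix.mul_assoc],
      hUU', Matrix.one_mul, Matrix.mul_one]
  have hDσ : σ = V * diagonal (RCLike.ofReal ∘ q) * star V := hσ.1.spectral_theorem
  have key : diagonal (RCLike.ofReal ∘ p)
      = ∑ a, M a * diagonal (RCLike.ofReal ∘ q) * star (M a) := by
    rw [← hDρ, h, hK σ, Finset.mul_sum, Finset.sum_mul]
    refine Finset.sum_congr rfl fun a _ => ?_
    rw [hMstar a]
    conv_lhs => rw [hDσ]
    simp only [hM_def, Matrix.mul_assoc]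
  -- entrywise nonneg weights
  set B : Fin n → Fin n → ℝ := fun i j => ∑ a, Complex.normSq (M a i j) with hB_def
  have hB0 : ∀ i j, 0 ≤ B i j :=
    fun i j => Finset.sum_nonneg fun a _ => Complex.normSq_nonneg _
  have hquad : ∀ (A : Matrix (Fin n) (Fin n) ℂ) (i : Fin n),
      (A * diagonal ((RCLike.ofReal ∘ q : Fin n → ℂ)) * star A) i i
        = ∑ j, ((Complex.normSq (A i j) * q j : ℝ) : ℂ) := by
    intro A i
    rw [Matrix.mul_apply]
    refine Finset.sum_congr rfl fun j _ => ?_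
    rw [Matrix.mul_diagonal, Matrix.star_apply]
    have hq' : ((RCLike.ofReal ∘ q : Fin n → ℂ)) j = ((q j : ℝ) : ℂ) := rfl
    rw [hq', show (star (A i j)) = (starRingEnd ℂ) (A i j) from rfl,
      mul_comm (A i j) ((q j : ℝ) : ℂ), mul_assoc, Complex.mul_conj]
    push_cast
    ring
  -- p i = ∑ j, B i j * q j
  have hpB : ∀ i, p i = ∑ j, B i j * q j := by
    intro i
    have h1 := congrFun (congrFun key i) i
    rw [Matrix.diagonal_apply_eq, Matrix.sum_apply] at h1
    have h2 : ∑ a, (M a * diagonal ((RCLike.ofReal ∘ q : Fin n → ℂ)) * star (M a)) i i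
        = ((∑ j, B i j * q j : ℝ) : ℂ) := by
      rw [Finset.sum_congr rfl fun a _ => hquad (M a) i, Finset.sum_comm]
      push_cast
      refine Finset.sum_congr rfl fun j _ => ?_
      simp only [hB_def]
      push_cast
      rw [Finset.sum_mul]
    rw [h2] at h1
    have h3 : ((p i : ℝ) : ℂ) = ((∑ j, B i j * q j : ℝ) : ℂ) := h1
    exact_mod_cast h3
  -- row sums = 1
  have hMM : ∑ a, M a * star (M a) = 1 := by
    have : ∀ a, M a * star (M a) = star U * (K a * (K a)ᴴ) * U := by
      intro a
      rw [hMstar a, hM_def]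
      calc star U * K a * V * (star V * (K a)ᴴ * U)
          = star U * K a * (V * star V) * ((K a)ᴴ * U) := by
            simp only [Matrix.mul_assoc]
        _ = star U * (K a * (K a)ᴴ) * U := by rw [hVV]; simp only [Matrix.mul_one,
            Matrix.mul_assoc]
    rw [Finset.sum_congr rfl fun a _ => this a, ← Finset.sum_mul, ← Finset.mul_sum, hK1,
      Matrix.mul_one, hUU']
  have hMM' : ∑ a, star (M a) * M a = 1 := by
    have : ∀ a, star (M a) * M a = star V * ((K a)ᴴ * K a) * V := by
      intro a
      rw [hMstar a, hM_def]
      calc star V * (K a)ᴴ * U * (star U * K a * V)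
          = star V * (K a)ᴴ * (U * star U) * (K a * V) := by simp only [Matrix.mul_assoc]
        _ = star V * ((K a)ᴴ * K a) * V := by rw [hUU]; simp only [Matrix.mul_one,
            Matrix.mul_assoc]
    rw [Finset.sum_congr rfl fun a _ => this a, ← Finset.sum_mul, ← Finset.mul_sum, hS,
      Matrix.mul_one, hVV']
  have hrow : ∀ i, ∑ j, B i j = 1 := by
    intro i
    have h1 := congrFun (congrFun hMM i) i
    rw [Matrix.sum_apply] at h1
    have h2 : ∑ a, (M a * star (M a)) i i = ((∑ j, B i j : ℝ) : ℂ) := by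
      have : ∀ a, (M a * star (M a)) i i = ∑ j, ((Complex.normSq (M a i j) : ℝ) : ℂ) := by
        intro a
        rw [Matrix.mul_apply]
        refine Finset.sum_congr rfl fun j _ => ?_
        rw [Matrix.star_apply,
          show (star (M a i j)) = (starRingEnd ℂ) (M a i j) from rfl, Complex.mul_conj]
      rw [Finset.sum_congr rfl fun a _ => this a, Finset.sum_comm]
      simp only [hB_def]
      push_cast
      rfl
    rw [h2, Matrix.one_apply_eq] at h1
    exact_mod_cast h1
  have hcol : ∀ j, ∑ i, B i j = 1 := by
    intro j
    have h1 := congrFun (congrFun hMM' j) j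
    rw [Matrix.sum_apply] at h1
    have h2 : ∑ a, (star (M a) * M a) j j = ((∑ i, B i j : ℝ) : ℂ) := by
      have : ∀ a, (star (M a) * M a) j j = ∑ i, ((Complex.normSq (M a i j) : ℝ) : ℂ) := by
        intro a
        rw [Matrix.mul_apply]
        refine Finset.sum_congr rfl fun i _ => ?_
        rw [Matrix.star_apply,
          show (star (M a i j)) = (starRingEnd ℂ) (M a i j) from rfl, mul_comm,
          Complex.mul_conj]
      rw [Finset.sum_congr rfl fun a _ => this a, Finset.sum_comm]
      simp only [hB_def]
      push_cast
      rfl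
    rw [h2, Matrix.one_apply_eq] at h1
    exact_mod_cast h1
  -- conclude
  constructor
  · intro s
    set c : Fin n → ℝ := fun j => ∑ i ∈ s, B i j with hc_def
    have hc0 : ∀ j, 0 ≤ c j := fun j => Finset.sum_nonneg fun i _ => hB0 i j
    have hc1 : ∀ j, c j ≤ 1 := by
      intro j
      rw [← hcol j]
      exact Finset.sum_le_sum_of_subset_of_nonneg (Finset.subset_univ s)
        (fun i _ _ => hB0 i j)
    have hcsum : ∑ j, c j = (s.card : ℝ) := by
      rw [hc_def]
      rw [Finset.sum_comm]
      rw [Finset.sum_congr rfl fun i _ => hrow i]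
      simp
    obtain ⟨t, htc, hle⟩ := weight_bound q c hc0 hc1 s.card
      (by simpa using s.card_le_univ) hcsum
    refine ⟨t, htc, ?_⟩
    calc ∑ i ∈ s, p i = ∑ i ∈ s, ∑ j, B i j * q j :=
          Finset.sum_congr rfl fun i _ => hpB i
      _ = ∑ j, c j * q j := by
          rw [Finset.sum_comm]
          exact Finset.sum_congr rfl fun j _ => by rw [hc_def, Finset.sum_mul]
      _ ≤ ∑ i ∈ t, q i := hle
  · calc ∑ i, p i = ∑ i, ∑ j, B i j * q j := Finset.sum_congr rfl fun i _ => hpB i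
      _ = ∑ j, (∑ i, B i j) * q j := by
          rw [Finset.sum_comm]
          exact Finset.sum_congr rfl fun j _ => (Finset.sum_mul _ _ _).symm
      _ = ∑ j, q j := Finset.sum_congr rfl fun j _ => by rw [hcol j, one_mul]
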